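/- At the SPNE, the market share of SP_1 is x_τ* = 1/2 - 8(p_2 - p_1)/(9ctε̄), and consequently SP_2's share is 1/2 + 8(p_2 - p_1)/(9ctε̄). -/

import Mathlib

theorem spne_market_share
    (c t εbar α p1 p2 ε1s ε2s v1s v2s xτ : ℝ)
    (hc : 0 < c) (ht : 0 < t) (hεbar : 0 < εbar)
    (hε2 : ε2s = (12 * εbar * c * α + 15 * c * t * εbar - 16 * (p2 - p1)) / (24 * t * c))
    (hε1 : ε1s = ε2s - 3 * εbar / 4)
    (hv : v2s - v1s = 3 * εbar / 4 * α - (p2 - p1) / (3 * c))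
    (hxτ : xτ = (v1s - v2s + t * (ε2s ^ 2 - ε1s ^ 2) / εbar) / (t * (ε2s - ε1s))) :
    xτ = 1 / 2 - 8 * (p2 - p1) / (9 * c * t * εbar) ∧
    1 - xτ = 1 / 2 + 8 * (p2 - p1) / (9 * c * t * εbar) := by
  have hv' : v1s - v2s = -(3 * εbar / 4 * α - (p2 - p1) / (3 * c)) := by linarith
  have h1 : xτ = 1 / 2 - 8 * (p2 - p1) / (9 * c * t * εbar) := by
    subst hε1 hε2 hxτ
    rw [hv']
    have hc' := hc.ne'
    have ht' := ht.ne'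
    have he' := hεbar.ne'
    field_simp
    ring_nf
  exact ⟨h1, by rw [h1]; ring⟩
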